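/- arXiv:1401.1394 — 4 statements merged into one kernel-verified Lean document; each statement's English description precedes it below -/
import Mathlib

section
/- Let (x_q) be a multi-sequence of nonnegative reals indexed by q ∈ ℤ_+^k which is decreasing in each index and bounded above by a constant C, and let L be its limit along the directed set ℤ_+^k. Then lim_{m→∞} (1 / C(m+k-1, k-1)) · Σ_{q_1+...+q_k = m} x_q = L. -/
open Filter

lemma card_adt : ∀ (k m : ℕ), (Finset.Nat.antidiagonalTuple (k+1) m).card = (m + k).choose k := by
  intro k
  induction k with
  | zero => intro m; simp [Finset.Nat.antidiagonalTuple_one]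
  | succ k ih =>
    intro m
    have hc : (Finset.Nat.antidiagonalTuple (k+2) m).card
        = (List.Nat.antidiagonalTuple (k+2) m).length := rfl
    rw [hc]
    show ((List.Nat.antidiagonal m).flatMap fun ni =>
      (List.Nat.antidiagonalTuple (k+1) ni.2).map fun x : Fin (k+1) → ℕ =>
        (Fin.cons ni.1 x : Fin (k+2) → ℕ)).length
      = (m + (k+1)).choose (k+1)
    rw [List.length_flatMap]
    simp only [Function.comp_def, List.length_map]
    have h1 : ∀ ni : ℕ × ℕ,
        (List.Nat.antidiagonalTuple (k+1) ni.2).length = (ni.2 + k).choose k := by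
      intro ni; rw [← ih ni.2]; rfl
    rw [List.map_congr_left (fun a _ => h1 a)]
    show (((List.range (m+1)).map fun i => (i, m - i)).map
        fun ni : ℕ × ℕ => (ni.2 + k).choose k).sum = _
    rw [List.map_map]
    have h2 : (((List.range (m+1)).map
        (fun i => ((m - i) + k).choose k)).sum)
        = ∑ i ∈ Finset.range (m+1), ((m - i) + k).choose k := rfl
    show ((List.range (m+1)).map (fun i => ((m - i) + k).choose k)).sum = _
    have h3 : ∑ i ∈ Finset.range (m+1), ((m - i) + k).choose k
        = ∑ i ∈ Finset.range (m+1), (i + k).choose k := by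
      rw [← Finset.sum_range_reflect (fun i => (i + k).choose k) (m+1)]
      simp
    rw [h2, h3, Nat.sum_range_add_choose m k]
    congr 1

lemma aux_antitone {k : ℕ} (x : (Fin k → ℕ) → ℝ)
    (hdec : ∀ q (i : Fin k), x (Function.update q i (q i + 1)) ≤ x q) :
    ∀ q q' : Fin k → ℕ, q ≤ q' → x q' ≤ x q := by
  suffices h : ∀ n (q q' : Fin k → ℕ), q ≤ q' → (∑ i, (q' i - q i)) = n → x q' ≤ x q by
    intro q q' hqq'; exact h _ q q' hqq' rfl
  intro n
  induction n with
  | zero =>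
    intro q q' h hs
    have : q' = q := by
      funext i
      have h2 : q' i - q i = 0 := (Finset.sum_eq_zero_iff.mp hs) i (Finset.mem_univ i)
      have h3 : q i ≤ q' i := h i
      omega
    rw [this]
  | succ n ih =>
    intro q q' h hs
    have hex : ∃ i, q i < q' i := by
      by_contra hc
      push_neg at hc
      have : ∑ i, (q' i - q i) = 0 :=
        Finset.sum_eq_zero fun i _ => by have h3 := hc i; omega
      omega
    obtain ⟨i, hi⟩ := hex
    set q'' := Function.update q' i (q' i - 1) with hq''def
    have hqi : ∀ j, q'' j = if j = i then q' i - 1 else q' j := by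
      intro j; rw [hq''def, Function.update_apply]
    have hle : q ≤ q'' := by
      intro j
      have h3 : q j ≤ q' j := h j
      rw [hqi j]
      by_cases hj : j = i
      · rw [if_pos hj]; subst hj; exact Nat.le_pred_of_lt hi
      · rw [if_neg hj]; exact h3
    have e4 : q'' i = q' i - 1 := by rw [hqi i, if_pos rfl]
    have hsum : ∑ j, (q'' j - q j) = n := by
      have e1 : ∑ j, (q' j - q j) = (q' i - q i) + ∑ j ∈ Finset.univ.erase i, (q' j - q j) :=
        (Finset.add_sum_erase _ _ (Finset.mem_univ i)).symm
      have e2 : ∑ j, (q'' j - q j) = (q'' i - q i) + ∑ j ∈ Finset.univ.erase i, (q'' j - q j) :=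
        (Finset.add_sum_erase _ _ (Finset.mem_univ i)).symm
      have e3 : ∑ j ∈ Finset.univ.erase i, (q'' j - q j)
          = ∑ j ∈ Finset.univ.erase i, (q' j - q j) := by
        refine Finset.sum_congr rfl fun j hj => ?_
        rw [hqi j, if_neg (Finset.ne_of_mem_erase hj)]
      omega
    have hstep : x q' ≤ x q'' := by
      have hupd : Function.update q'' i (q'' i + 1) = q' := by
        rw [e4, hq''def, Function.update_idem]
        have h5 : q' i - 1 + 1 = q' i := by omega
        rw [h5, Function.update_eq_self]
      have h6 := hdec q'' i
      rwa [hupd] at h6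
    exact hstep.trans (ih q q'' hle hsum)

lemma slice_fixed_coord_card {k' m v : ℕ} (i : Fin (k'+1)) :
    ((Finset.Nat.antidiagonalTuple (k'+1) m).filter (fun q => q i = v)).card
      ≤ (Finset.Nat.antidiagonalTuple k' (m - v)).card := by
  apply Finset.card_le_card_of_injOn (fun q => fun j => q (i.succAbove j))
  · intro q hq
    rw [Finset.mem_coe, Finset.mem_filter, Finset.Nat.mem_antidiagonalTuple] at hq
    obtain ⟨hsum, hqi⟩ := hq
    simp only [Finset.mem_coe, Finset.Nat.mem_antidiagonalTuple]
    have := Fin.sum_univ_succAbove q i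
    omega
  · intro q1 h1 q2 h2 heq
    simp only [Finset.coe_filter, Set.mem_setOf_eq] at h1 h2
    funext j
    by_cases hj : j = i
    · rw [hj, h1.2, h2.2]
    · obtain ⟨j', hj'⟩ := Fin.exists_succAbove_eq hj
      rw [← hj']
      exact congrFun heq j'

lemma small_slice_card {k' s m : ℕ} (hs : 1 ≤ s) (hsm : s ≤ m) :
    (Finset.Nat.antidiagonalTuple k' s).card ≤ k' * ((m + k').choose (k'-1)) := by
  cases k' with
  | zero =>
    obtain ⟨t, rfl⟩ : ∃ t, s = t + 1 := ⟨s - 1, by omega⟩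
    rw [Finset.Nat.antidiagonalTuple_zero_succ]
    simp
  | succ r =>
    rw [card_adt r s]
    have h1 : (s + r).choose r ≤ (m + (r+1)).choose r :=
      Nat.choose_le_choose r (by omega)
    have h2 : (m + (r+1)).choose ((r+1)-1) = (m + (r+1)).choose r := rfl
    rw [h2]
    calc (s+r).choose r ≤ (m + (r+1)).choose r := h1
      _ ≤ (r+1) * ((m + (r+1)).choose r) := Nat.le_mul_of_pos_left _ (by omega)

lemma badset_card {k' N m : ℕ} (hm : N ≤ m) :
    ((Finset.Nat.antidiagonalTuple (k'+1) m).filter (fun q => ¬ ∀ i, N ≤ q i)).card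
      ≤ (k'+1) * (N * (k' * ((m + k').choose (k'-1)))) := by
  set s := Finset.Nat.antidiagonalTuple (k'+1) m with hs
  have hsub : s.filter (fun q => ¬ ∀ i, N ≤ q i) ⊆
      Finset.univ.biUnion (fun i : Fin (k'+1) =>
        (Finset.range N).biUnion (fun v => s.filter (fun q => q i = v))) := by
    intro q hq
    rw [Finset.mem_filter] at hq
    obtain ⟨hqs, hq2⟩ := hq
    push_neg at hq2
    obtain ⟨i, hi⟩ := hq2
    rw [Finset.mem_biUnion]
    exact ⟨i, Finset.mem_univ i, Finset.mem_biUnion.mpr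
      ⟨q i, Finset.mem_range.mpr hi, Finset.mem_filter.mpr ⟨hqs, rfl⟩⟩⟩
  calc (s.filter (fun q => ¬ ∀ i, N ≤ q i)).card
      ≤ _ := Finset.card_le_card hsub
    _ ≤ ∑ i : Fin (k'+1), ((Finset.range N).biUnion
          (fun v => s.filter (fun q => q i = v))).card := Finset.card_biUnion_le
    _ ≤ ∑ _i : Fin (k'+1), (N * (k' * ((m + k').choose (k'-1)))) := by
        apply Finset.sum_le_sum
        intro i _
        calc ((Finset.range N).biUnion (fun v => s.filter (fun q => q i = v))).card
            ≤ ∑ v ∈ Finset.range N, (s.filter (fun q => q i = v)).card :=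
              Finset.card_biUnion_le
          _ ≤ ∑ _v ∈ Finset.range N, (k' * ((m + k').choose (k'-1))) := by
              apply Finset.sum_le_sum
              intro v hv
              rw [Finset.mem_range] at hv
              exact (slice_fixed_coord_card i).trans
                (small_slice_card (by omega) (by omega))
          _ = N * (k' * ((m + k').choose (k'-1))) := by
              rw [Finset.sum_const, Finset.card_range, smul_eq_mul]
    _ = (k'+1) * (N * (k' * ((m + k').choose (k'-1)))) := by
        rw [Finset.sum_const, Finset.card_univ, Fintype.card_fin, smul_eq_mul]

lemma choose_ratio (k' m : ℕ) :
    k' * ((m + k').choose (k'-1)) * (m+1) = k' * k' * ((m + k').choose k') := by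
  cases k' with
  | zero => simp
  | succ r =>
    have h := Nat.choose_succ_right_eq (m + (r+1)) r
    have h2 : m + (r+1) - r = m + 1 := by omega
    rw [h2] at h
    have h3 : (r+1) - 1 = r := rfl
    rw [h3]
    calc (r+1) * ((m + (r+1)).choose r) * (m+1)
        = (r+1) * ((m + (r+1)).choose r * (m+1)) := by ring
      _ = (r+1) * ((m + (r+1)).choose (r+1) * (r+1)) := by rw [h]
      _ = (r+1) * (r+1) * ((m + (r+1)).choose (r+1)) := by ring

/-- Cesàro means over the slices {q : q₁+⋯+q_k = m} of a bounded multi-sequence of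
nonnegative reals, decreasing in each index, converge to its limit L along ℤ₊^k. -/
theorem stmt4 {k : ℕ} (hk : 1 ≤ k) (x : (Fin k → ℕ) → ℝ) (C L : ℝ)
    (hpos : ∀ q, 0 ≤ x q) (hbdd : ∀ q, x q ≤ C)
    (hdec : ∀ q (i : Fin k), x (Function.update q i (q i + 1)) ≤ x q)
    (hlim : Filter.Tendsto x Filter.atTop (nhds L)) :
    Filter.Tendsto
      (fun m : ℕ =>
        (((m + k - 1).choose (k - 1) : ℝ))⁻¹ * ∑ q ∈ Finset.Nat.antidiagonalTuple k m, x q)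
      Filter.atTop (nhds L) := by
  obtain ⟨k', rfl⟩ : ∃ k', k = k' + 1 := ⟨k - 1, by omega⟩
  have hanti : ∀ q q' : Fin (k'+1) → ℕ, q ≤ q' → x q' ≤ x q := aux_antitone x hdec
  have hLle : ∀ q, L ≤ x q := fun q =>
    le_of_tendsto hlim (Filter.eventually_atTop.mpr ⟨q, fun b hb => hanti q b hb⟩)
  have hLC : L ≤ C := (hLle 0).trans (hbdd 0)
  have hCL : (0:ℝ) ≤ C - L := by linarith
  have hcoef : ∀ m : ℕ, ((m + (k'+1) - 1).choose ((k'+1) - 1))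
      = (Finset.Nat.antidiagonalTuple (k'+1) m).card := by
    intro m
    rw [card_adt k' m]
    congr 1
  rw [Metric.tendsto_atTop]
  intro ε hε
  have hev := (Metric.tendsto_nhds.mp hlim) (ε/2) (by positivity)
  rw [Filter.eventually_atTop] at hev
  obtain ⟨q₀, hq₀⟩ := hev
  set N : ℕ := Finset.univ.sup q₀ with hNdef
  have hgood : ∀ q : Fin (k'+1) → ℕ, (∀ i, N ≤ q i) → x q - L < ε/2 := by
    intro q hq
    have h1 : q₀ ≤ q := fun i => le_trans (Finset.le_sup (Finset.mem_univ i)) (hq i)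
    have h2 := hq₀ q h1
    rw [Real.dist_eq] at h2
    have h3 := abs_lt.mp h2
    linarith [h3.2]
  set K : ℝ := (((k'+1) * (N * (k' * k')) : ℕ) : ℝ) with hKdef
  have hK0 : 0 ≤ K := by positivity
  obtain ⟨M₁, hM₁⟩ := exists_nat_gt (((C - L) * K) / (ε/2))
  refine ⟨max N M₁, fun m hm => ?_⟩
  have hmN : N ≤ m := le_trans (le_max_left _ _) hm
  have hmM : (M₁ : ℝ) ≤ m := by exact_mod_cast le_trans (le_max_right _ _) hm
  rw [hcoef m]
  set s := Finset.Nat.antidiagonalTuple (k'+1) m with hsdef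
  set T : ℕ := s.card with hTdef
  have hTchoose : T = (m + k').choose k' := card_adt k' m
  have hTpos : 0 < T := by
    rw [hTchoose]
    exact Nat.choose_pos (by omega)
  have hTR : (0:ℝ) < (T:ℝ) := by exact_mod_cast hTpos
  -- lower bound
  have hsum_ge : (T:ℝ) * L ≤ ∑ q ∈ s, x q := by
    have := Finset.card_nsmul_le_sum s x L (fun q _ => hLle q)
    simpa [nsmul_eq_mul] using this
  have hAL : L ≤ (T:ℝ)⁻¹ * ∑ q ∈ s, x q := by
    rw [inv_mul_eq_div, le_div_iff₀ hTR]
    linarith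
  -- bad set
  classical
  set bad := s.filter (fun q => ¬ ∀ i, N ≤ q i) with hbaddef
  have hbadcard : bad.card ≤ (k'+1) * (N * (k' * ((m + k').choose (k'-1)))) :=
    badset_card hmN
  have hbadT : (bad.card : ℝ) * ((m:ℝ)+1) ≤ K * T := by
    have h1 : bad.card * (m+1) ≤ ((k'+1) * (N * (k' * ((m + k').choose (k'-1))))) * (m+1) :=
      Nat.mul_le_mul_right _ hbadcard
    have hc := choose_ratio k' m
    have h2 : ((k'+1) * (N * (k' * ((m + k').choose (k'-1))))) * (m+1)
        = ((k'+1) * (N * (k' * k'))) * ((m + k').choose k') := by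
      calc ((k'+1) * (N * (k' * ((m + k').choose (k'-1))))) * (m+1)
          = ((k'+1) * N) * (k' * ((m + k').choose (k'-1)) * (m+1)) := by ring
        _ = ((k'+1) * N) * (k' * k' * ((m + k').choose k')) := by rw [hc]
        _ = ((k'+1) * (N * (k' * k'))) * ((m + k').choose k') := by ring
    rw [h2, ← hTchoose] at h1
    have h3 : ((bad.card * (m+1) : ℕ) : ℝ) ≤ (((k'+1) * (N * (k' * k')) * T : ℕ) : ℝ) :=
      Nat.cast_le.mpr h1
    push_cast at h3
    rw [hKdef]
    push_cast
    linarith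
  -- sum upper bound
  have hgoodsum : ∑ q ∈ s.filter (fun q => ∀ i, N ≤ q i), (x q - L) ≤ (T:ℝ) * (ε/2) := by
    calc ∑ q ∈ s.filter (fun q => ∀ i, N ≤ q i), (x q - L)
        ≤ (s.filter (fun q => ∀ i, N ≤ q i)).card • (ε/2) := by
          apply Finset.sum_le_card_nsmul
          intro q hq
          rw [Finset.mem_filter] at hq
          exact le_of_lt (hgood q hq.2)
      _ = ((s.filter (fun q => ∀ i, N ≤ q i)).card : ℝ) * (ε/2) := by
          rw [nsmul_eq_mul]
      _ ≤ (T:ℝ) * (ε/2) := by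
          have := Finset.card_filter_le s (fun q => ∀ i, N ≤ q i)
          have h4 : ((s.filter (fun q => ∀ i, N ≤ q i)).card : ℝ) ≤ (T:ℝ) := by
            exact_mod_cast this
          nlinarith
  have hbadsum : ∑ q ∈ bad, (x q - L) ≤ (bad.card : ℝ) * (C - L) := by
    calc ∑ q ∈ bad, (x q - L) ≤ bad.card • (C - L) := by
          apply Finset.sum_le_card_nsmul
          intro q hq
          have := hbdd q
          linarith
      _ = (bad.card : ℝ) * (C - L) := by rw [nsmul_eq_mul]
  have hsplit : ∑ q ∈ s.filter (fun q => ∀ i, N ≤ q i), (x q - L) + ∑ q ∈ bad, (x q - L)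
      = ∑ q ∈ s, (x q - L) :=
    Finset.sum_filter_add_sum_filter_not s (fun q => ∀ i, N ≤ q i) (fun q => x q - L)
  have hsum_le : ∑ q ∈ s, (x q - L) ≤ (bad.card : ℝ) * (C - L) + (T:ℝ) * (ε/2) := by
    rw [← hsplit]; linarith
  -- finish
  have hmp : (0:ℝ) < (m:ℝ)+1 := by positivity
  have hKM : (C - L) * K < (ε/2) * ((m:ℝ)+1) := by
    rw [div_lt_iff₀ (by positivity)] at hM₁
    have h5 : (M₁:ℝ) * (ε/2) ≤ ((m:ℝ)+1) * (ε/2) :=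
      mul_le_mul_of_nonneg_right (by linarith) (by positivity)
    calc (C - L) * K < (M₁:ℝ) * (ε/2) := hM₁
      _ ≤ ((m:ℝ)+1) * (ε/2) := h5
      _ = (ε/2) * ((m:ℝ)+1) := by ring
  have hbCL : (bad.card:ℝ) * (C - L) < (ε/2) * (T:ℝ) := by
    have h6 : (bad.card:ℝ) * ((m:ℝ)+1) * (C-L) ≤ K * (T:ℝ) * (C-L) :=
      mul_le_mul_of_nonneg_right hbadT hCL
    have h7 : (C - L) * K * (T:ℝ) < (ε/2) * ((m:ℝ)+1) * (T:ℝ) :=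
      mul_lt_mul_of_pos_right hKM hTR
    have h8 : (bad.card:ℝ) * (C - L) * ((m:ℝ)+1) < ((ε/2) * (T:ℝ)) * ((m:ℝ)+1) := by
      ring_nf at h6 h7 ⊢
      linarith
    exact lt_of_mul_lt_mul_right h8 hmp.le
  have hA_sub : (T:ℝ)⁻¹ * ∑ q ∈ s, x q - L = (T:ℝ)⁻¹ * ∑ q ∈ s, (x q - L) := by
    rw [Finset.sum_sub_distrib, Finset.sum_const, nsmul_eq_mul]
    field_simp
    rw [hTdef]; ring
  rw [Real.dist_eq, abs_of_nonneg (by linarith : (0:ℝ) ≤ (T:ℝ)⁻¹ * ∑ q ∈ s, x q - L), hA_sub]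
  have h8 : ∑ q ∈ s, (x q - L) < ε * T := by linarith
  calc (T:ℝ)⁻¹ * ∑ q ∈ s, (x q - L) < (T:ℝ)⁻¹ * (ε * T) :=
        mul_lt_mul_of_pos_left h8 (inv_pos.mpr hTR)
    _ = ε := by field_simp
end

section
/- Let (x_q) be a multi-sequence of nonnegative reals indexed by q ∈ ℤ_+^k which is decreasing in each index and bounded, with limit L along the directed set ℤ_+^k. Then lim_{m→∞} (1 / C(m+k, k)) · Σ_{q_1+...+q_k ≤ m} x_q = L. -/
open Filter Finset

/-- The region of tuples with sum at most `m`. -/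
def Dreg (k m : ℕ) : Finset (Fin k → ℕ) :=
  (Finset.range (m+1)).biUnion (Finset.Nat.antidiagonalTuple k)

lemma mem_Dreg {k m : ℕ} {q : Fin k → ℕ} : q ∈ Dreg k m ↔ ∑ i, q i ≤ m := by
  simp only [Dreg, Finset.mem_biUnion, Finset.mem_range, Nat.lt_succ_iff,
    Finset.Nat.mem_antidiagonalTuple]
  exact ⟨fun ⟨j, hj, e⟩ => e ▸ hj, fun h => ⟨_, h, rfl⟩⟩

lemma sum_Dreg {k m : ℕ} (x : (Fin k → ℕ) → ℝ) :
    ∑ j ∈ Finset.range (m + 1), ∑ q ∈ Finset.Nat.antidiagonalTuple k j, x q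
      = ∑ q ∈ Dreg k m, x q := by
  rw [Dreg, Finset.sum_biUnion]
  intro i _ j _ hij
  simp only [Function.onFun]
  rw [Finset.disjoint_left]
  intro q hq hq'
  rw [Finset.Nat.mem_antidiagonalTuple] at hq hq'
  exact hij (hq ▸ hq')

lemma card_Dreg : ∀ (k m : ℕ), (Dreg k m).card = (m + k).choose k := by
  intro k
  induction k with
  | zero =>
    intro m
    have : Dreg 0 m = Finset.univ :=
      Finset.eq_univ_of_forall (fun q => mem_Dreg.mpr (by simp))
    rw [this, Finset.card_univ]
    simp
  | succ k ih =>
    intro m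
    have hD : Dreg (k+1) m
        = (Finset.range (m+1)).biUnion
            (fun t => (Dreg k (m - t)).image (Fin.cons (α := fun _ => ℕ) t)) := by
      ext q
      simp only [mem_Dreg, Finset.mem_biUnion, Finset.mem_range, Nat.lt_succ_iff,
        Finset.mem_image]
      constructor
      · intro h
        rw [Fin.sum_univ_succ] at h
        refine ⟨q 0, le_trans (Nat.le_add_right _ _) h, Fin.tail q, ?_, ?_⟩
        · show ∑ i : Fin k, q i.succ ≤ m - q 0
          omega
        · exact Fin.cons_self_tail q
      · rintro ⟨t, ht, p, hp, rfl⟩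
        rw [Fin.sum_univ_succ]
        simp only [Fin.cons_zero, Fin.cons_succ]
        omega
    have hdisj : ∀ t ∈ Finset.range (m+1), ∀ t' ∈ Finset.range (m+1), t ≠ t' →
        Disjoint ((Dreg k (m - t)).image (Fin.cons (α := fun _ => ℕ) t))
          ((Dreg k (m - t')).image (Fin.cons (α := fun _ => ℕ) t')) := by
      intro t _ t' _ htt'
      rw [Finset.disjoint_left]
      rintro q hq hq'
      rw [Finset.mem_image] at hq hq'
      obtain ⟨p, _, rfl⟩ := hq
      obtain ⟨p', _, he⟩ := hq'
      apply htt'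
      have := congrFun he 0
      simpa using this.symm
    rw [hD, Finset.card_biUnion hdisj]
    have hcard : ∀ t, ((Dreg k (m - t)).image (Fin.cons (α := fun _ => ℕ) t)).card
        = (m - t + k).choose k := by
      intro t
      rw [Finset.card_image_of_injective _ (Fin.cons_right_injective (α := fun _ => ℕ) t), ih]
    simp only [hcard]
    have hrefl : ∑ t ∈ Finset.range (m+1), (m - t + k).choose k
        = ∑ s ∈ Finset.range (m+1), (s + k).choose k := by
      have := Finset.sum_range_reflect (fun s => (s + k).choose k) (m+1)
      simpa using this
    rw [hrefl]
    have : ∑ s ∈ Finset.range (m+1), (s + k).choose k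
        = ∑ i ∈ Finset.Icc k (m + k), i.choose k := by
      rw [← Finset.Ico_add_one_right_eq_Icc, Finset.sum_Ico_eq_sum_range]
      have h1 : m + k + 1 - k = m + 1 := by omega
      rw [h1]
      exact Finset.sum_congr rfl (fun i _ => by rw [Nat.add_comm])
    rw [this, Nat.sum_Icc_choose]
    congr 1

lemma x_anti {k : ℕ} {x : (Fin k → ℕ) → ℝ}
    (hdec : ∀ q (i : Fin k), x (Function.update q i (q i + 1)) ≤ x q) :
    ∀ q r : Fin k → ℕ, q ≤ r → x r ≤ x q := by
  have key : ∀ (n : ℕ) (q r : Fin k → ℕ), q ≤ r → ∑ i, (r i - q i) = n → x r ≤ x q := by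
    intro n
    induction n with
    | zero =>
      intro q r hqr hsum
      have : r = q := by
        funext i
        have h1 := Finset.sum_eq_zero_iff.mp hsum i (Finset.mem_univ i)
        have h2 : q i ≤ r i := hqr i
        omega
      rw [this]
    | succ n ihn =>
      intro q r hqr hsum
      have hex : ∃ i, q i < r i := by
        by_contra h
        push_neg at h
        have : ∑ i, (r i - q i) = 0 :=
          Finset.sum_eq_zero (fun i _ => by have := h i; omega)
        omega
      obtain ⟨i, hi⟩ := hex
      set r' := Function.update r i (r i - 1) with hr'
      have h1 : q ≤ r' := by
        intro j
        by_cases hj : j = i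
        · subst hj; simp only [hr', Function.update_self]; omega
        · simp only [hr', Function.update_of_ne hj]; exact hqr j
      have h2 : ∑ j, (r' j - q j) = n := by
        have e : (fun j => r' j - q j)
            = Function.update (fun j => r j - q j) i (r i - 1 - q i) := by
          funext j
          by_cases hj : j = i
          · subst hj; simp [hr']
          · simp [hr', Function.update_of_ne hj]
        calc ∑ j, (r' j - q j)
            = ∑ j, Function.update (fun j => r j - q j) i (r i - 1 - q i) j := by rw [e]
          _ = (r i - 1 - q i) + ∑ j ∈ Finset.univ \ {i}, (r j - q j) :=
              Finset.sum_update_of_mem (Finset.mem_univ i) _ _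
          _ = n := by
              have e2 : ∑ j, (r j - q j)
                  = (r i - q i) + ∑ j ∈ Finset.univ \ {i}, (r j - q j) :=
                Finset.sum_eq_add_sum_sdiff_singleton_of_mem (Finset.mem_univ i) _
              omega
      have h3 : x r ≤ x r' := by
        have hh := hdec r' i
        have e : Function.update r' i (r' i + 1) = r := by
          funext j
          by_cases hj : j = i
          · subst hj; simp only [hr', Function.update_self, Function.update_idem]
            rw [show r j - 1 + 1 = r j by omega]
          · simp only [hr', Function.update_of_ne hj]
        rwa [e] at hh
      exact h3.trans (ihn q r' h1 h2)
  intro q r hqr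
  exact key _ q r hqr rfl

lemma lim_le {k : ℕ} {x : (Fin k → ℕ) → ℝ} {L : ℝ}
    (hdec : ∀ q (i : Fin k), x (Function.update q i (q i + 1)) ≤ x q)
    (hlim : Filter.Tendsto x Filter.atTop (nhds L)) : ∀ q, L ≤ x q := by
  intro q
  have hg : Tendsto (fun n : ℕ => (fun i => q i + n))
      atTop (atTop : Filter (Fin k → ℕ)) := by
    rw [tendsto_atTop]
    intro b
    filter_upwards [Filter.eventually_ge_atTop (Finset.univ.sup b)] with n hn i
    calc b i ≤ Finset.univ.sup b := Finset.le_sup (Finset.mem_univ i)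
      _ ≤ n := hn
      _ ≤ q i + n := Nat.le_add_left _ _
  apply le_of_tendsto (hlim.comp hg)
  filter_upwards with n
  exact x_anti hdec q _ (fun i => Nat.le_add_right _ _)

/-- Cesàro means over the regions {q : q₁+⋯+q_k ≤ m} of a bounded multi-sequence of
nonnegative reals, decreasing in each index, converge to its limit L along ℤ₊^k. -/
theorem stmt5 {k : ℕ} (hk : 1 ≤ k) (x : (Fin k → ℕ) → ℝ) (L : ℝ)
    (hpos : ∀ q, 0 ≤ x q) (hbdd : ∃ C, ∀ q, x q ≤ C)
    (hdec : ∀ q (i : Fin k), x (Function.update q i (q i + 1)) ≤ x q)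
    (hlim : Filter.Tendsto x Filter.atTop (nhds L)) :
    Filter.Tendsto
      (fun m : ℕ =>
        (((m + k).choose k : ℝ))⁻¹ *
          ∑ j ∈ Finset.range (m + 1), ∑ q ∈ Finset.Nat.antidiagonalTuple k j, x q)
      Filter.atTop (nhds L) := by
  classical
  obtain ⟨K, rfl⟩ : ∃ K, k = K + 1 := ⟨k - 1, by omega⟩
  obtain ⟨C, hC⟩ := hbdd
  have hLle : ∀ q, L ≤ x q := lim_le hdec hlim
  have hCL : L ≤ C := (hLle 0).trans (hC 0)
  rw [Metric.tendsto_atTop]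
  intro ε hε
  -- find the threshold Q from the limit hypothesis
  obtain ⟨Q, hQ⟩ := Filter.eventually_atTop.mp (hlim.eventually_lt_const
    (by linarith : L < L + ε/2))
  set N : ℕ := Finset.univ.sup Q with hN
  set c : ℝ := ((K:ℝ)+1) * ((K:ℝ)+1) * N * (C - L) with hcdef
  have hc : Tendsto (fun m : ℕ => c / ((m + (K+1) : ℕ) : ℝ)) atTop (nhds 0) :=
    (tendsto_const_div_atTop_nhds_zero_nat c).comp (tendsto_add_atTop_nat (K+1))
  obtain ⟨M, hM⟩ := Filter.eventually_atTop.mp (hc.eventually_lt_const (half_pos hε))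
  refine ⟨M, fun m hm => ?_⟩
  have hM' : c / ((m:ℝ) + (K:ℝ) + 1) < ε/2 := by
    have := hM m hm
    push_cast at this
    convert this using 2
    · rfl
    ring
  -- notation
  set n : ℕ := (m + (K+1)).choose (K+1) with hn
  have hnpos : 0 < n := Nat.choose_pos (by omega)
  have hnR : (0:ℝ) < (n:ℝ) := by exact_mod_cast hnpos
  set ch : ℕ := (m + K).choose K with hch
  have hchpos : 0 < ch := Nat.choose_pos (by omega)
  have hchR : (0:ℝ) < (ch:ℝ) := by exact_mod_cast hchpos
  have hid : (m + K + 1) * ch = n * (K + 1) := by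
    rw [hn, hch]
    exact Nat.add_one_mul_choose_eq (m + K) K
  have hidR : ((m:ℝ) + (K:ℝ) + 1) * (ch:ℝ) = (n:ℝ) * ((K:ℝ)+1) := by
    exact_mod_cast hid
  set D := Dreg (K+1) m with hD
  set S : ℝ := ∑ q ∈ D, x q with hS
  have hcard : D.card = n := card_Dreg (K+1) m
  -- the bad set
  set bad := D.filter (fun q => ∃ i, q i < N) with hbad
  set good := D.filter (fun q => ¬∃ i, q i < N) with hgood
  -- bad set cardinality bound
  have hbadcard : bad.card ≤ (K+1) * N * ch := by
    have hsub : bad ⊆ Finset.univ.biUnion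
        (fun i : Fin (K+1) => (Finset.range N).biUnion
          (fun t => D.filter (fun q => q i = t))) := by
      intro q hq
      rw [hbad, Finset.mem_filter] at hq
      obtain ⟨hqD, i, hi⟩ := hq
      simp only [Finset.mem_biUnion, Finset.mem_univ, Finset.mem_range,
        Finset.mem_filter, true_and]
      exact ⟨i, q i, hi, hqD, rfl⟩
    have hfil : ∀ (i : Fin (K+1)) (t : ℕ),
        (D.filter (fun q => q i = t)).card ≤ ch := by
      intro i t
      have h1 : (D.filter (fun q => q i = t)).card ≤ (Dreg K m).card := by
        apply Finset.card_le_card_of_injOn (fun q => q ∘ i.succAbove)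
        · intro q hq
          rw [Finset.mem_coe, Finset.mem_filter, hD, mem_Dreg] at hq
          rw [Finset.mem_coe, mem_Dreg]
          have := Fin.sum_univ_succAbove q i
          simp only [Function.comp]
          omega
        · intro q hq q' hq' he
          simp only [Finset.mem_coe, Finset.mem_filter] at hq hq'
          funext j
          rcases eq_or_ne j i with rfl | hj
          · rw [hq.2, hq'.2]
          · obtain ⟨l, rfl⟩ := Fin.exists_succAbove_eq hj
            exact congrFun he l
      rw [card_Dreg] at h1
      exact h1
    calc bad.card ≤ _ := Finset.card_le_card hsub
      _ ≤ ∑ i : Fin (K+1), ((Finset.range N).biUnion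
            (fun t => D.filter (fun q => q i = t))).card := Finset.card_biUnion_le
      _ ≤ ∑ i : Fin (K+1), ∑ t ∈ Finset.range N,
            (D.filter (fun q => q i = t)).card :=
          Finset.sum_le_sum (fun i _ => Finset.card_biUnion_le)
      _ ≤ ∑ _i : Fin (K+1), ∑ _t ∈ Finset.range N, ch :=
          Finset.sum_le_sum (fun i _ => Finset.sum_le_sum (fun t _ => hfil i t))
      _ = (K+1) * N * ch := by
          simp [Finset.sum_const, Finset.card_univ, mul_assoc]
  have hbadcardR : (bad.card : ℝ) ≤ ((K:ℝ)+1) * (N:ℝ) * (ch:ℝ) := by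
    exact_mod_cast hbadcard
  -- sum decomposition and bounds
  have hsplit : S - (n:ℝ) * L
      = ∑ q ∈ bad, (x q - L) + ∑ q ∈ good, (x q - L) := by
    rw [hbad, hgood, Finset.sum_filter_add_sum_filter_not, Finset.sum_sub_distrib,
      Finset.sum_const, hcard, nsmul_eq_mul]
  have hb1 : ∑ q ∈ bad, (x q - L) ≤ (bad.card:ℝ) * (C - L) := by
    have := Finset.sum_le_card_nsmul bad (fun q => x q - L) (C - L)
      (fun q _ => by have := hC q; change x q - L ≤ C - L; linarith)
    simpa [nsmul_eq_mul] using this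
  have hb2 : ∑ q ∈ good, (x q - L) ≤ (n:ℝ) * (ε/2) := by
    have h1 : ∑ q ∈ good, (x q - L) ≤ (good.card:ℝ) * (ε/2) := by
      have := Finset.sum_le_card_nsmul good (fun q => x q - L) (ε/2)
        (fun q hq => by
          rw [hgood, Finset.mem_filter] at hq
          push_neg at hq
          have hxq : x q < L + ε/2 := by
            apply hQ
            intro i
            calc Q i ≤ N := Finset.le_sup (Finset.mem_univ i)
              _ ≤ q i := hq.2 i
          change x q - L ≤ ε / 2
          linarith)
      simpa [nsmul_eq_mul] using this
    have h2 : (good.card:ℝ) ≤ (n:ℝ) := by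
      have := Finset.card_filter_le D (fun q => ¬∃ i, q i < N)
      rw [hcard] at this
      exact_mod_cast this
    have h3 : (good.card:ℝ) * (ε/2) ≤ (n:ℝ) * (ε/2) :=
      mul_le_mul_of_nonneg_right h2 (by linarith)
    linarith
  have hnonneg : 0 ≤ ∑ q ∈ bad, (x q - L) :=
    Finset.sum_nonneg (fun q _ => by have := hLle q; change 0 ≤ x q - L; linarith)
  have hnonneg' : 0 ≤ ∑ q ∈ good, (x q - L) :=
    Finset.sum_nonneg (fun q _ => by have := hLle q; change 0 ≤ x q - L; linarith)
  -- bad part is small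
  have hbadsmall : (bad.card:ℝ) * (C - L) < (n:ℝ) * (ε/2) := by
    have hml : (0:ℝ) < (m:ℝ) + (K:ℝ) + 1 := by positivity
    have hlt : c < (ε/2) * ((m:ℝ) + (K:ℝ) + 1) := by
      rw [div_lt_iff₀ hml] at hM'
      exact hM'
    have e1 : (bad.card:ℝ) * (C - L) * ((K:ℝ)+1) ≤ c * (ch:ℝ) := by
      have h4 : (bad.card:ℝ) * (C - L) ≤ ((K:ℝ)+1) * (N:ℝ) * (ch:ℝ) * (C - L) :=
        mul_le_mul_of_nonneg_right hbadcardR (by linarith)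
      have h5 : ((K:ℝ)+1) * (N:ℝ) * (ch:ℝ) * (C - L) * ((K:ℝ)+1) = c * (ch:ℝ) := by
        rw [hcdef]; ring
      nlinarith [h4]
    have e2 : c * (ch:ℝ) < (ε/2) * ((n:ℝ) * ((K:ℝ)+1)) := by
      calc c * (ch:ℝ) < (ε/2) * ((m:ℝ) + (K:ℝ) + 1) * (ch:ℝ) :=
            mul_lt_mul_of_pos_right hlt hchR
        _ = (ε/2) * (((m:ℝ) + (K:ℝ) + 1) * (ch:ℝ)) := by ring
        _ = (ε/2) * ((n:ℝ) * ((K:ℝ)+1)) := by rw [hidR]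
    have e3 : (bad.card:ℝ) * (C - L) * ((K:ℝ)+1) < (n:ℝ) * (ε/2) * ((K:ℝ)+1) := by
      calc (bad.card:ℝ) * (C - L) * ((K:ℝ)+1) ≤ c * (ch:ℝ) := e1
        _ < (ε/2) * ((n:ℝ) * ((K:ℝ)+1)) := e2
        _ = (n:ℝ) * (ε/2) * ((K:ℝ)+1) := by ring
    exact lt_of_mul_lt_mul_right e3 (by positivity)
  -- conclude
  have hSub : S - (n:ℝ) * L < (n:ℝ) * ε := by
    rw [hsplit]
    have : (n:ℝ) * (ε/2) + (n:ℝ) * (ε/2) = (n:ℝ) * ε := by ring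
    linarith
  have hSlb : (n:ℝ) * L ≤ S := by linarith [hsplit, hnonneg, hnonneg']
  rw [sum_Dreg x]
  rw [Real.dist_eq, abs_of_nonneg]
  · have h6 : (n:ℝ)⁻¹ * S - L < (n:ℝ)⁻¹ * ((n:ℝ) * ε + (n:ℝ) * L) - L := by
      have h9 := mul_lt_mul_of_pos_left
        (show S < (n:ℝ) * ε + (n:ℝ) * L by linarith [hSub]) (inv_pos.mpr hnR)
      linarith
    calc (n:ℝ)⁻¹ * S - L < (n:ℝ)⁻¹ * ((n:ℝ) * ε + (n:ℝ) * L) - L := h6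
      _ = ε := by field_simp; ring
  · have h7 : (n:ℝ)⁻¹ * ((n:ℝ) * L) ≤ (n:ℝ)⁻¹ * S :=
      mul_le_mul_of_nonneg_left hSlb (by positivity)
    have h8 : (n:ℝ)⁻¹ * ((n:ℝ) * L) = L := by field_simp
    linarith
end

section
/- Let φ_1,...,φ_k be commuting positive linear maps on B(H) with φ_i(T^+(H)) ⊆ T^+(H) and trace(φ_i(X)) ≤ trace(X) for all positive trace-class X. Then for any positive trace-class X, lim_{m→∞} (1 / C(m+k-1, k-1)) Σ_{q_1+...+q_k = m} trace[φ_1^{q_1} ∘ ··· ∘ φ_k^{q_k}(X)] exists and equals lim over the directed set ℤ_+^k of trace[φ_1^{q_1} ∘ ··· ∘ φ_k^{q_k}(X)]. -/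
open Filter

lemma my_hockey (j n : ℕ) : ∑ b ∈ Finset.range (n+1), (b+j).choose j = (n+j+1).choose (j+1) := by
  induction n with
  | zero => simp
  | succ n ih =>
    rw [Finset.sum_range_succ, ih, show n+1+j = n+j+1 by omega,
      Nat.choose_succ_succ (n+j+1) j, Nat.succ_eq_add_one]
    omega

lemma my_length_adt (j : ℕ) : ∀ n : ℕ, (List.Nat.antidiagonalTuple (j+1) n).length = (n + j).choose j := by
  induction j with
  | zero => intro n; simp
  | succ j ih =>
    intro n
    rw [List.Nat.antidiagonalTuple]
    have h1 : List.Nat.antidiagonal n = (List.range (n+1)).map fun i => (i, n - i) := rfl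
    simp only [List.length_flatMap, h1, List.map_map, Function.comp_def, List.length_map, ih]
    have h3 : ((List.range (n+1)).map fun i => (n - i + j).choose j).sum
        = ∑ i ∈ Finset.range (n+1), (n - i + j).choose j := rfl
    rw [h3]
    have h4 : ∑ i ∈ Finset.range (n+1), ((n - i) + j).choose j
        = ∑ i ∈ Finset.range (n+1), (i + j).choose j := by
      rw [← Finset.sum_range_reflect (fun b => (b + j).choose j) (n+1)]
      apply Finset.sum_congr rfl
      intro i hi
      simp only [Finset.mem_range] at hi
      rw [show n + 1 - 1 - i = n - i by omega]
    rw [h4, my_hockey, show n + (j+1) = n + j + 1 by omega]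

lemma my_card_adt (j n : ℕ) : (Finset.Nat.antidiagonalTuple (j+1) n).card = (n + j).choose j := by
  have : (Finset.Nat.antidiagonalTuple (j+1) n).card = (List.Nat.antidiagonalTuple (j+1) n).length := rfl
  rw [this, my_length_adt]

lemma my_card_filter_eq (j m t : ℕ) (i : Fin (j+1)) :
    ((Finset.Nat.antidiagonalTuple (j+1) m).filter (fun q => q i = t)).card
      ≤ (Finset.Nat.antidiagonalTuple j (m - t)).card := by
  apply Finset.card_le_card_of_injOn (fun q => i.removeNth q)
  · intro q hq
    simp only [Finset.mem_coe, Finset.mem_filter, Finset.Nat.mem_antidiagonalTuple] at hq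
    rw [Finset.mem_coe, Finset.Nat.mem_antidiagonalTuple]
    have hs := Fin.sum_univ_succAbove q i
    have : ∀ x : Fin j, i.removeNth q x = q (i.succAbove x) := fun x => rfl
    simp only [this]
    omega
  · intro a ha b hb hab
    simp only [Finset.coe_filter, Set.mem_setOf_eq, Finset.Nat.mem_antidiagonalTuple] at ha hb
    have hab' : i.removeNth a = i.removeNth b := hab
    have h1 : a = i.insertNth (a i) (i.removeNth a) := (Fin.insertNth_self_removeNth i a).symm
    have h2 : i.insertNth (b i) (i.removeNth b) = b := Fin.insertNth_self_removeNth i b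
    rw [h1, ha.2, hab', ← hb.2, h2]

lemma my_badfilter (j m N : ℕ) (i : Fin (j+1)) :
    ((Finset.Nat.antidiagonalTuple (j+1) m).filter (fun q => q i < N)).card
      ≤ ∑ t ∈ Finset.range N,
          ((Finset.Nat.antidiagonalTuple (j+1) m).filter (fun q => q i = t)).card := by
  have hsub : (Finset.Nat.antidiagonalTuple (j+1) m).filter (fun q => q i < N)
      ⊆ (Finset.range N).biUnion
          (fun t => (Finset.Nat.antidiagonalTuple (j+1) m).filter (fun q => q i = t)) := by
    intro q hq
    simp only [Finset.mem_filter, Finset.mem_biUnion, Finset.mem_range] at hq ⊢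
    exact ⟨q i, hq.2, hq.1, rfl⟩
  exact le_trans (Finset.card_le_card hsub) (Finset.card_biUnion_le)

lemma my_keylem (j m t N : ℕ) (ht : t < N) (hm : N ≤ m) :
    (Finset.Nat.antidiagonalTuple j (m - t)).card * (m + j) ≤ j * (m + j).choose j := by
  cases j with
  | zero =>
    obtain ⟨s, hs⟩ : ∃ s, m - t = s + 1 := ⟨m - t - 1, by omega⟩
    rw [hs, Finset.Nat.antidiagonalTuple_zero_succ]
    simp
  | succ j =>
    rw [my_card_adt]
    have h1 : (m - t + j).choose j ≤ (m + j).choose j :=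
      Nat.choose_le_choose j (by omega)
    have h2 : (m + j + 1) * (m + j).choose j = (m + j + 1).choose (j + 1) * (j + 1) :=
      Nat.add_one_mul_choose_eq (m + j) j
    calc (m - t + j).choose j * (m + (j+1)) ≤ (m + j).choose j * (m + j + 1) := by
          rw [show m + (j+1) = m + j + 1 by omega]; exact Nat.mul_le_mul_right _ h1
      _ = (j + 1) * (m + (j+1)).choose (j+1) := by
          rw [mul_comm, h2, show m + (j+1) = m + j + 1 by omega, mul_comm]

/-- The trace of a (positive) operator computed with respect to a Hilbert basis. -/
noncomputable def trB {H : Type*} [NormedAddCommGroup H] [InnerProductSpace ℂ H]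
    {ι : Type*} (e : HilbertBasis ι ℂ H) (A : H →L[ℂ] H) : ℝ :=
  ∑' i, (inner ℂ (e i) (A (e i)) : ℂ).re

/-- `X` is a positive trace-class operator (with respect to the Hilbert basis `e`). -/
def PTC {H : Type*} [NormedAddCommGroup H] [InnerProductSpace ℂ H] [CompleteSpace H]
    {ι : Type*} (e : HilbertBasis ι ℂ H) (X : H →L[ℂ] H) : Prop :=
  X.IsPositive ∧ Summable (fun i => (inner ℂ (e i) (X (e i)) : ℂ).re)

/-- Composition `φ₁^{q₁} ∘ ⋯ ∘ φ_k^{q_k}`. -/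
def iterComp {E : Type*} {k : ℕ} (φ : Fin k → (E → E)) (q : Fin k → ℕ) : E → E :=
  (List.finRange k).foldr (fun i f => (φ i)^[q i] ∘ f) id

lemma my_trB_nonneg {H : Type*} [NormedAddCommGroup H] [InnerProductSpace ℂ H] [CompleteSpace H]
    {ι : Type*} (e : HilbertBasis ι ℂ H) (Y : H →L[ℂ] H) (hY : PTC e Y) : 0 ≤ trB e Y := by
  apply tsum_nonneg
  intro i
  have h := hY.1.2 (e i)
  simp only [ContinuousLinearMap.reApplyInnerSelf] at h
  have h2 : (inner ℂ (e i) (Y (e i)) : ℂ).re = RCLike.re (inner ℂ (Y (e i)) (e i) : ℂ) := by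
    rw [RCLike.re_to_complex]
    exact inner_re_symm (𝕜 := ℂ) _ _
  rw [h2]
  exact h

/-- For commuting positive trace-contractive maps on B(H) and positive trace-class X, the
Cesàro means over {q : q₁+⋯+q_k = m} of trace[φ₁^{q₁}∘⋯∘φ_k^{q_k}(X)] converge to the limit
of that net along ℤ₊^k. -/
theorem stmt7 {H : Type*} [NormedAddCommGroup H] [InnerProductSpace ℂ H] [CompleteSpace H]
    {ι : Type*} (e : HilbertBasis ι ℂ H) {k : ℕ} (hk : 1 ≤ k)
    (φ : Fin k → ((H →L[ℂ] H) →ₗ[ℂ] (H →L[ℂ] H)))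
    (hcomm : ∀ i j, (φ i).comp (φ j) = (φ j).comp (φ i))
    (hpos : ∀ i (A : H →L[ℂ] H), A.IsPositive → (φ i A).IsPositive)
    (hptc : ∀ i (X : H →L[ℂ] H), PTC e X → PTC e (φ i X))
    (htr : ∀ i (X : H →L[ℂ] H), PTC e X → trB e (φ i X) ≤ trB e X)
    (X : H →L[ℂ] H) (hX : PTC e X) :
    ∃ L : ℝ,
      Filter.Tendsto (fun q : Fin k → ℕ => trB e (iterComp (fun i A => φ i A) q X))
          Filter.atTop (nhds L) ∧
        Filter.Tendsto
          (fun m : ℕ =>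
            (((m + k - 1).choose (k - 1) : ℝ))⁻¹ *
              ∑ q ∈ Finset.Nat.antidiagonalTuple k m,
                trB e (iterComp (fun i A => φ i A) q X))
          Filter.atTop (nhds L) := by
  obtain ⟨j, rfl⟩ : ∃ j, k = j + 1 := ⟨k - 1, by omega⟩
  set f : Fin (j+1) → (H →L[ℂ] H) → (H →L[ℂ] H) := fun i A => φ i A with hf
  have hcomm' : ∀ i i' A, f i (f i' A) = f i' (f i A) := by
    intro i i' A
    have := LinearMap.congr_fun (hcomm i i') A
    simpa [LinearMap.comp_apply] using this
  have hiter : ∀ (i i' : Fin (j+1)) (n : ℕ) (A), f i ((f i')^[n] A) = (f i')^[n] (f i A) := by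
    intro i i' n
    induction n with
    | zero => intro A; rfl
    | succ n ih =>
      intro A
      rw [Function.iterate_succ_apply, Function.iterate_succ_apply, ih, hcomm']
  set Fl : List (Fin (j+1)) → (Fin (j+1) → ℕ) → (H →L[ℂ] H) → (H →L[ℂ] H) :=
    fun l q => List.foldr (fun i g => (f i)^[q i] ∘ g) id l with hFl
  have hFl_cons : ∀ i l q A, Fl (i :: l) q A = (f i)^[q i] (Fl l q A) := fun _ _ _ _ => rfl
  have hFl_comm : ∀ (i : Fin (j+1)) l q A, f i (Fl l q A) = Fl l q (f i A) := by
    intro i l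
    induction l with
    | nil => intro q A; rfl
    | cons i' l ih =>
      intro q A
      rw [hFl_cons, hFl_cons, hiter, ih]
  have hFl_itercomm : ∀ (i : Fin (j+1)) (n : ℕ) l q A,
      (f i)^[n] (Fl l q A) = Fl l q ((f i)^[n] A) := by
    intro i n l q
    induction n with
    | zero => intro A; rfl
    | succ n ih =>
      intro A
      rw [Function.iterate_succ_apply', Function.iterate_succ_apply', ih, hFl_comm]
  have hFl_add : ∀ l (q d : Fin (j+1) → ℕ) A, Fl l (q + d) A = Fl l q (Fl l d A) := by
    intro l
    induction l with
    | nil => intro q d A; rfl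
    | cons i l ih =>
      intro q d A
      rw [hFl_cons, hFl_cons, hFl_cons, Pi.add_apply, Function.iterate_add_apply, ih,
        hFl_itercomm]
  have hstep : ∀ (i : Fin (j+1)) (n : ℕ) (Y : H →L[ℂ] H), PTC e Y →
      PTC e ((f i)^[n] Y) ∧ trB e ((f i)^[n] Y) ≤ trB e Y := by
    intro i n
    induction n with
    | zero => intro Y hY; exact ⟨hY, le_rfl⟩
    | succ n ih =>
      intro Y hY
      obtain ⟨h1, h2⟩ := ih Y hY
      rw [Function.iterate_succ_apply']
      exact ⟨hptc i _ h1, le_trans (htr i _ h1) h2⟩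
  have hFl_ptc : ∀ l (q : Fin (j+1) → ℕ) (Y : H →L[ℂ] H), PTC e Y →
      PTC e (Fl l q Y) ∧ trB e (Fl l q Y) ≤ trB e Y := by
    intro l
    induction l with
    | nil => intro q Y hY; exact ⟨hY, le_rfl⟩
    | cons i l ih =>
      intro q Y hY
      obtain ⟨h1, h2⟩ := ih q Y hY
      rw [hFl_cons]
      obtain ⟨h3, h4⟩ := hstep i (q i) _ h1
      exact ⟨h3, le_trans h4 h2⟩
  set g : (Fin (j+1) → ℕ) → ℝ := fun q => trB e (iterComp f q X) with hg
  have hgFl : ∀ q, g q = trB e (Fl (List.finRange (j+1)) q X) := fun q => rfl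
  have hganti : Antitone g := by
    intro q q' hle
    have hq' : q' = q + (q' - q) := by
      funext i
      have h := Pi.le_def.mp hle i
      simp only [Pi.add_apply, Pi.sub_apply]
      omega
    rw [hgFl, hgFl, hq', show q + (q' - q) = (q' - q) + q from add_comm _ _, hFl_add]
    exact (hFl_ptc _ (q' - q) _ ((hFl_ptc _ q X hX).1)).2
  have hg0 : ∀ q, 0 ≤ g q := by
    intro q
    rw [hgFl]
    exact my_trB_nonneg e _ (hFl_ptc _ q X hX).1
  have hbdd : BddBelow (Set.range g) := ⟨0, by rintro x ⟨q, rfl⟩; exact hg0 q⟩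
  set L := ⨅ q, g q with hL
  have htend : Filter.Tendsto g Filter.atTop (nhds L) := tendsto_atTop_ciInf hganti hbdd
  have hLle : ∀ q, L ≤ g q := fun q => ciInf_le hbdd q
  refine ⟨L, htend, ?_⟩
  set T := g 0 with hT
  have hgT : ∀ q, g q ≤ T := fun q => hganti (fun i => Nat.zero_le _)
  have hTL : L ≤ T := hLle 0
  clear_value g L T
  rw [Metric.tendsto_atTop]
  intro ε hε
  have hev : ∀ᶠ q in Filter.atTop, g q < L + ε/2 :=
    htend.eventually_lt_const (by linarith)
  obtain ⟨q₀, hq₀⟩ := Filter.eventually_atTop.mp hev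
  set N := (Finset.univ.sup q₀) + 1 with hN
  have hN1 : 1 ≤ N := by omega
  have hNq : ∀ q : Fin (j+1) → ℕ, (∀ i, N ≤ q i) → g q < L + ε/2 := by
    intro q hq
    apply hq₀
    intro i
    show q₀ i ≤ q i
    have h1 : q₀ i ≤ Finset.univ.sup q₀ := Finset.le_sup (Finset.mem_univ i)
    have h2 := hq i
    omega
  set K : ℝ := (((j+1) * N * j : ℕ) : ℝ) with hK
  have hK0 : 0 ≤ K := by positivity
  obtain ⟨M, hM⟩ := exists_nat_gt ((2 * K * (T - L)) / ε)
  refine ⟨max N M, ?_⟩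
  intro m hm
  have hmN : N ≤ m := le_trans (le_max_left _ _) hm
  have hmM : M ≤ m := le_trans (le_max_right _ _) hm
  set A := Finset.Nat.antidiagonalTuple (j+1) m with hA
  set Cn : ℕ := (m + j).choose j with hCn
  have hcard : A.card = Cn := by rw [hA, hCn, my_card_adt]
  have hCpos : 0 < Cn := by rw [hCn]; exact Nat.choose_pos (by omega)
  have hCR : (0:ℝ) < (Cn : ℝ) := by exact_mod_cast hCpos
  have hchoose_eq : ((m + (j+1) - 1).choose ((j+1) - 1) : ℝ) = (Cn : ℝ) := by
    rw [hCn]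
    congr 2 <;> omega
  -- bad count
  set Bc : ℕ := (A.filter (fun q => ¬ ∀ i, N ≤ q i)).card with hBc
  have hBc1 : Bc ≤ ∑ i : Fin (j+1), ((A.filter fun q => q i < N)).card := by
    refine le_trans (Finset.card_le_card ?_) Finset.card_biUnion_le
    intro q hq
    simp only [Finset.mem_filter] at hq
    obtain ⟨i, hi⟩ := not_forall.mp hq.2
    exact Finset.mem_biUnion.mpr ⟨i, Finset.mem_univ i, Finset.mem_filter.mpr ⟨hq.1, Nat.lt_of_not_le hi⟩⟩
  have hBc3 : Bc * (m + j) ≤ (j+1) * N * j * Cn := by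
    calc Bc * (m + j)
        ≤ (∑ i : Fin (j+1), ∑ t ∈ Finset.range N,
            (Finset.Nat.antidiagonalTuple j (m - t)).card) * (m + j) := by
          refine Nat.mul_le_mul_right _ (le_trans hBc1 (Finset.sum_le_sum fun i _ => ?_))
          exact le_trans (my_badfilter j m N i)
            (Finset.sum_le_sum fun t _ => my_card_filter_eq j m t i)
      _ = ∑ i : Fin (j+1), ∑ t ∈ Finset.range N,
            (Finset.Nat.antidiagonalTuple j (m - t)).card * (m + j) := by
          rw [Finset.sum_mul]
          exact Finset.sum_congr rfl fun i _ => Finset.sum_mul _ _ _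
      _ ≤ ∑ _i : Fin (j+1), ∑ _t ∈ Finset.range N, j * Cn := by
          refine Finset.sum_le_sum fun i _ => Finset.sum_le_sum fun t ht => ?_
          exact my_keylem j m t N (Finset.mem_range.mp ht) hmN
      _ = (j+1) * N * j * Cn := by
          simp [Finset.sum_const, Finset.card_univ, mul_assoc]
  have hBcR : (Bc : ℝ) * ((m : ℝ) + j) ≤ K * Cn := by
    have := (Nat.cast_le (α := ℝ)).mpr hBc3
    push_cast at this ⊢
    rw [hK]
    push_cast
    linarith
  -- sum estimates
  have hEnn : 0 ≤ ∑ q ∈ A, (g q - L) :=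
    Finset.sum_nonneg fun q _ => by have := hLle q; linarith
  have hgood : ∑ q ∈ A.filter (fun q => ∀ i, N ≤ q i), (g q - L) ≤ (Cn : ℝ) * (ε/2) := by
    have h1 := Finset.sum_le_card_nsmul (A.filter (fun q => ∀ i, N ≤ q i))
      (fun q => g q - L) (ε/2) (fun q hq => by
        have := hNq q (Finset.mem_filter.mp hq).2
        linarith)
    rw [nsmul_eq_mul] at h1
    refine le_trans h1 ?_
    have h2 : ((A.filter (fun q => ∀ i, N ≤ q i)).card : ℝ) ≤ (Cn : ℝ) := by
      have := Finset.card_filter_le A (fun q => ∀ i, N ≤ q i)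
      rw [hcard] at this
      exact_mod_cast this
    nlinarith
  have hbad : ∑ q ∈ A.filter (fun q => ¬ ∀ i, N ≤ q i), (g q - L) ≤ (Bc : ℝ) * (T - L) := by
    have h1 := Finset.sum_le_card_nsmul (A.filter (fun q => ¬ ∀ i, N ≤ q i))
      (fun q => g q - L) (T - L) (fun q hq => by show g q - L ≤ T - L; have := hgT q; linarith)
    rw [nsmul_eq_mul] at h1
    exact h1
  have hEub : ∑ q ∈ A, (g q - L) ≤ (Cn : ℝ) * (ε/2) + (Bc : ℝ) * (T - L) := by
    rw [← Finset.sum_filter_add_sum_filter_not A (fun q => ∀ i, N ≤ q i) (fun q => g q - L)]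
    exact add_le_add hgood hbad
  -- strict bound on bad term
  have hmj : (0:ℝ) < (m : ℝ) + j := by
    have : (1:ℝ) ≤ (m:ℝ) := by exact_mod_cast (le_trans hN1 hmN)
    linarith
  have hMR : 2 * K * (T - L) < ε * ((m:ℝ) + j) := by
    have h1 : 2 * K * (T - L) < M * ε := (div_lt_iff₀ hε).mp hM
    have h2 : (M : ℝ) ≤ (m : ℝ) := by exact_mod_cast hmM
    have h3 : (m : ℝ) ≤ (m : ℝ) + j := le_add_of_nonneg_right (by positivity)
    have h4 : (M:ℝ) * ε ≤ ((m:ℝ)+j) * ε := mul_le_mul_of_nonneg_right (le_trans h2 h3) (le_of_lt hε)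
    linarith
  have hbadterm : (Cn : ℝ)⁻¹ * ((Bc : ℝ) * (T - L)) < ε/2 := by
    rw [inv_mul_eq_div, div_lt_iff₀ hCR]
    have hTL' : (0:ℝ) ≤ T - L := by linarith
    have h1 := mul_le_mul_of_nonneg_right hBcR hTL'
    have h2 := mul_lt_mul_of_pos_right hMR hCR
    have hgoal : (Bc:ℝ)*(T-L)*((m:ℝ)+(j:ℝ)) < (ε/2*(Cn:ℝ))*((m:ℝ)+(j:ℝ)) := by
      ring_nf
      ring_nf at h1 h2
      linarith
    exact lt_of_mul_lt_mul_right hgoal (le_of_lt hmj)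
  -- assemble
  have hsum_eq : ∑ q ∈ A, g q = (∑ q ∈ A, (g q - L)) + (Cn : ℝ) * L := by
    rw [Finset.sum_sub_distrib, Finset.sum_const, hcard, nsmul_eq_mul]
    ring
  rw [Real.dist_eq, hchoose_eq]
  have hval : (Cn:ℝ)⁻¹ * ∑ q ∈ A, g q - L = (Cn:ℝ)⁻¹ * ∑ q ∈ A, (g q - L) := by
    rw [hsum_eq]
    field_simp
    ring
  rw [hval, abs_of_nonneg (by positivity)]
  calc (Cn:ℝ)⁻¹ * ∑ q ∈ A, (g q - L)
      ≤ (Cn:ℝ)⁻¹ * ((Cn : ℝ) * (ε/2) + (Bc : ℝ) * (T - L)) := by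
        apply mul_le_mul_of_nonneg_left hEub (by positivity)
    _ = ε/2 + (Cn : ℝ)⁻¹ * ((Bc : ℝ) * (T - L)) := by
        field_simp
    _ < ε/2 + ε/2 := by linarith
    _ = ε := by ring
end

section
/- Let φ_1,...,φ_k be commuting positive linear maps on B(H) such that each φ_i is pure, i.e., φ_i^n(I) → 0 in the weak operator topology as n → ∞. Set Δ_φ := (id − φ_1) ∘ ··· ∘ (id − φ_k). Then Δ_φ is injective, and every X ∈ B(H) satisfies X = Σ_{s_k≥0} φ_k^{s_k}( Σ_{s_{k-1}≥0} φ_{k-1}^{s_{k-1}}( ··· Σ_{s_1≥0} φ_1^{s_1}(Δ_φ(X)) ··· )), where the iterated series converge in the weak operator topology. -/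
open Filter

open ContinuousLinearMap

section Aux

variable {H : Type*} [NormedAddCommGroup H] [InnerProductSpace ℂ H] [CompleteSpace H]

lemma pos_inner_real (B : H →L[ℂ] H) (hB : B.IsPositive) (x : H) :
    (inner ℂ (B x) x : ℂ) = (B.reApplyInnerSelf x : ℂ) := by
  have h := hB.1
  have h2 : (starRingEnd ℂ) (inner ℂ (B x) x : ℂ) = (inner ℂ (B x) x : ℂ) := by
    rw [inner_conj_symm]; exact (h x x).symm
  rw [reApplyInnerSelf]
  exact ((Complex.conj_eq_iff_re).mp h2).symm

lemma smul_one_sub_pos (T : H →L[ℂ] H) (hT : IsSelfAdjoint T) :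
    ((‖T‖ : ℂ) • (1 : H →L[ℂ] H) - T).IsPositive := by
  constructor
  · have h1 : IsSelfAdjoint ((‖T‖ : ℂ) • (1 : H →L[ℂ] H)) := by
      rw [IsSelfAdjoint, star_smul, star_one]
      simp [Complex.conj_ofReal]
    exact ContinuousLinearMap.isSelfAdjoint_iff_isSymmetric.mp (h1.sub hT)
  · intro x
    have hb : |Complex.re (inner ℂ (T x) x : ℂ)| ≤ ‖T‖ * ‖x‖ ^ 2 := by
      calc |Complex.re (inner ℂ (T x) x : ℂ)| ≤ ‖(inner ℂ (T x) x : ℂ)‖ := Complex.abs_re_le_norm _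
        _ ≤ ‖T x‖ * ‖x‖ := norm_inner_le_norm _ _
        _ ≤ ‖T‖ * ‖x‖ * ‖x‖ := by gcongr; exact T.le_opNorm x
        _ = ‖T‖ * ‖x‖ ^ 2 := by ring
    have h3 : reApplyInnerSelf ((‖T‖ : ℂ) • (1 : H →L[ℂ] H) - T) x
        = ‖T‖ * ‖x‖ ^ 2 - Complex.re (inner ℂ (T x) x : ℂ) := by
      simp only [reApplyInnerSelf, sub_apply, smul_apply, ContinuousLinearMap.one_apply, inner_sub_left,
        inner_smul_left, Complex.conj_ofReal, Complex.sub_re, Complex.mul_re,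
        Complex.ofReal_re, Complex.ofReal_im]
      rw [inner_self_eq_norm_sq_to_K (𝕜 := ℂ) x]
      simp [Complex.sub_re, Complex.mul_re, ← Complex.ofReal_pow, Complex.ofReal_re]
    rw [h3]
    have := abs_le.mp hb
    linarith [this.2]

lemma tendsto_iter_inner (ψ : (H →L[ℂ] H) →ₗ[ℂ] (H →L[ℂ] H))
    (hpos : ∀ A : H →L[ℂ] H, A.IsPositive → (ψ A).IsPositive)
    (hpure : ∀ x y : H,
      Tendsto (fun n : ℕ => (inner ℂ (((fun A => ψ A)^[n] (1 : H →L[ℂ] H)) x) y : ℂ))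
        atTop (nhds 0))
    (A : H →L[ℂ] H) (x y : H) :
    Tendsto (fun n : ℕ => (inner ℂ (((fun A => ψ A)^[n] A) x) y : ℂ)) atTop (nhds 0) := by
  have hiter : ∀ (n : ℕ) (B : H →L[ℂ] H), (fun A => ψ A)^[n] B = (ψ ^ n) B := by
    intro n B
    rw [Module.End.pow_apply]
  have hposn : ∀ (n : ℕ) (B : H →L[ℂ] H), B.IsPositive → ((ψ ^ n) B).IsPositive := by
    intro n
    induction n with
    | zero => intro B hB; simpa using hB
    | succ n ih =>
      intro B hB
      rw [pow_succ, Module.End.mul_apply]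
      exact ih _ (hpos _ hB)
  -- diagonal case for positive B
  have hdiag : ∀ (B : H →L[ℂ] H), B.IsPositive → ∀ z : H,
      Tendsto (fun n : ℕ => (inner ℂ (((ψ ^ n) B) z) z : ℂ)) atTop (nhds 0) := by
    intro B hB z
    have hord : ∀ n : ℕ, ((ψ ^ n) B).reApplyInnerSelf z
        ≤ ‖B‖ * Complex.re (inner ℂ (((ψ ^ n) (1 : H →L[ℂ] H)) z) z : ℂ) := by
      intro n
      have hp : ((ψ ^ n) ((‖B‖ : ℂ) • (1 : H →L[ℂ] H) - B)).IsPositive :=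
        hposn n _ (smul_one_sub_pos B hB.isSelfAdjoint)
      have heq : (ψ ^ n) ((‖B‖ : ℂ) • (1 : H →L[ℂ] H) - B)
          = (‖B‖ : ℂ) • (ψ ^ n) (1 : H →L[ℂ] H) - (ψ ^ n) B := by
        rw [map_sub, map_smul]
      have h2 := hp.2 z
      rw [heq] at h2
      have h3 : reApplyInnerSelf ((‖B‖ : ℂ) • (ψ ^ n) (1 : H →L[ℂ] H) - (ψ ^ n) B) z
          = ‖B‖ * Complex.re (inner ℂ (((ψ ^ n) (1 : H →L[ℂ] H)) z) z : ℂ)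
            - ((ψ ^ n) B).reApplyInnerSelf z := by
        simp only [reApplyInnerSelf, sub_apply, smul_apply, inner_sub_left,
          inner_smul_left, Complex.conj_ofReal, Complex.sub_re, Complex.mul_re,
          Complex.ofReal_re, Complex.ofReal_im, RCLike.re_to_complex]
        ring
      rw [h3] at h2
      linarith
    have hone : Tendsto (fun n : ℕ =>
        ‖B‖ * Complex.re (inner ℂ (((ψ ^ n) (1 : H →L[ℂ] H)) z) z : ℂ)) atTop (nhds 0) := by
      have := (Complex.continuous_re.tendsto 0).comp (by simpa only [hiter] using hpure z z)
      simpa using this.const_mul ‖B‖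
    have hre : Tendsto (fun n : ℕ => ((ψ ^ n) B).reApplyInnerSelf z) atTop (nhds 0) :=
      squeeze_zero (fun n => (hposn n B hB).2 z) hord hone
    have : Tendsto (fun n : ℕ => ((((ψ ^ n) B).reApplyInnerSelf z : ℝ) : ℂ)) atTop (nhds 0) := by
      simpa [Function.comp_def] using (Complex.continuous_ofReal.tendsto 0).comp hre
    refine this.congr fun n => ?_
    exact (pos_inner_real _ (hposn n B hB) z).symm
  -- off-diagonal for positive B via polarization
  have hoff : ∀ (B : H →L[ℂ] H), B.IsPositive → ∀ u v : H,
      Tendsto (fun n : ℕ => (inner ℂ (((ψ ^ n) B) u) v : ℂ)) atTop (nhds 0) := by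
    intro B hB u v
    have hpol : ∀ n : ℕ, (inner ℂ (((ψ ^ n) B) u) v : ℂ)
        = ((inner ℂ (((ψ ^ n) B) (u + v)) (u + v) : ℂ)
            - (inner ℂ (((ψ ^ n) B) (u - v)) (u - v) : ℂ)
            - Complex.I * (inner ℂ (((ψ ^ n) B) (u + Complex.I • v)) (u + Complex.I • v) : ℂ)
            + Complex.I * (inner ℂ (((ψ ^ n) B) (u - Complex.I • v)) (u - Complex.I • v) : ℂ)) / 4 := by
      intro n
      exact inner_map_polarization' (((ψ ^ n) B : H →L[ℂ] H) : H →ₗ[ℂ] H) u v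
    have h1 := hdiag B hB (u + v)
    have h2 := hdiag B hB (u - v)
    have h3 := hdiag B hB (u + Complex.I • v)
    have h4 := hdiag B hB (u - Complex.I • v)
    have := (((h1.sub h2).sub ((tendsto_const_nhds (x := Complex.I)).mul h3)).add
      ((tendsto_const_nhds (x := Complex.I)).mul h4)).div_const 4
    simp only [mul_zero, sub_zero, add_zero, zero_sub, zero_add, zero_div, sub_self] at this
    refine this.congr fun n => (hpol n).symm
  -- selfadjoint case
  have hsa : ∀ (B : H →L[ℂ] H), IsSelfAdjoint B → ∀ u v : H,
      Tendsto (fun n : ℕ => (inner ℂ (((ψ ^ n) B) u) v : ℂ)) atTop (nhds 0) := by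
    intro B hB u v
    have hnegB : IsSelfAdjoint (-B) := hB.neg
    have hP : ((‖B‖ : ℂ) • (1 : H →L[ℂ] H) - B).IsPositive := smul_one_sub_pos B hB
    have hQ : ((‖B‖ : ℂ) • (1 : H →L[ℂ] H) + B).IsPositive := by
      have := smul_one_sub_pos (-B) hnegB
      simpa [norm_neg, sub_neg_eq_add] using this
    have hdecomp : B = (((1 / 2 : ℝ)) : ℂ) • ((‖B‖ : ℂ) • (1 : H →L[ℂ] H) + B)
        - (((1 / 2 : ℝ)) : ℂ) • ((‖B‖ : ℂ) • (1 : H →L[ℂ] H) - B) := by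
      push_cast
      module
    have h1 := hoff _ hQ u v
    have h2 := hoff _ hP u v
    have := ((tendsto_const_nhds (x := (1/2 : ℂ))).mul h1).sub
      ((tendsto_const_nhds (x := (1/2 : ℂ))).mul h2)
    simp only [mul_zero, sub_zero, sub_self] at this
    refine this.congr fun n => ?_
    have hmap : (ψ ^ n) B = (((1 / 2 : ℝ)) : ℂ) • ((ψ ^ n) ((‖B‖ : ℂ) • (1 : H →L[ℂ] H) + B))
        - (((1 / 2 : ℝ)) : ℂ) • ((ψ ^ n) ((‖B‖ : ℂ) • (1 : H →L[ℂ] H) - B)) := by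
      conv_lhs => rw [hdecomp]
      rw [map_sub, map_smul, map_smul]
    rw [hmap]
    simp only [sub_apply, smul_apply, inner_sub_left, inner_smul_left, map_inv₀, map_ofNat,
      map_div₀, map_one, Complex.conj_ofReal]
    push_cast
    ring
  -- general case
  set P : H →L[ℂ] H := (((1 / 2 : ℝ)) : ℂ) • (A + adjoint A) with hPdef
  set Q : H →L[ℂ] H := ((Complex.I / 2 : ℂ)) • (adjoint A - A) with hQdef
  have hPsa : IsSelfAdjoint P := by
    rw [IsSelfAdjoint, hPdef, star_smul, star_add]
    simp [ContinuousLinearMap.star_eq_adjoint, adjoint_adjoint, Complex.star_def,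
      Complex.conj_ofReal, add_comm]
  have hQsa : IsSelfAdjoint Q := by
    rw [IsSelfAdjoint, hQdef, star_smul, star_sub]
    simp only [ContinuousLinearMap.star_eq_adjoint, adjoint_adjoint, Complex.star_def, map_div₀,
      Complex.conj_I, map_ofNat]
    rw [smul_sub, smul_sub]
    module
  have hAPQ : A = P + Complex.I • Q := by
    rw [hPdef, hQdef, smul_smul]
    have h2 : Complex.I * (Complex.I / 2) = -(1/2 : ℂ) := by
      rw [mul_div_assoc']
      rw [Complex.I_mul_I]
      norm_num
    rw [h2]
    push_cast
    module
  have h1 := hsa P hPsa x y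
  have h2 := hsa Q hQsa x y
  have hfin := h1.add ((tendsto_const_nhds (x := -Complex.I)).mul h2)
  simp only [mul_zero, add_zero] at hfin
  have : Tendsto (fun n : ℕ => (inner ℂ (((ψ ^ n) A) x) y : ℂ)) atTop (nhds 0) := by
    refine hfin.congr fun n => ?_
    have hmap : (ψ ^ n) A = (ψ ^ n) P + Complex.I • (ψ ^ n) Q := by
      conv_lhs => rw [hAPQ]
      rw [map_add]
      simp only [map_smul]
    rw [hmap]
    simp [add_apply, smul_apply, inner_add_left, inner_smul_left, Complex.conj_I]
    ring
  refine this.congr fun n => ?_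
  rw [hiter]


lemma sum_iter (ψ : (H →L[ℂ] H) →ₗ[ℂ] (H →L[ℂ] H)) (W : H →L[ℂ] H) (n : ℕ) :
    ∑ s ∈ Finset.range n, (fun A => ψ A)^[s] (W - ψ W) = W - (fun A => ψ A)^[n] W := by
  induction n with
  | zero => simp
  | succ n ih =>
    rw [Finset.sum_range_succ, ih]
    have e1 : (fun A => ψ A)^[n] (W - ψ W)
        = (fun A => ψ A)^[n] W - (fun A => ψ A)^[n] (ψ W) := by
      rw [← Module.End.pow_apply, ← Module.End.pow_apply, ← Module.End.pow_apply, map_sub]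
    rw [e1, Function.iterate_succ_apply]
    abel

-- WOT limit zero + fixed point gives zero
lemma fixed_zero (ψ : (H →L[ℂ] H) →ₗ[ℂ] (H →L[ℂ] H))
    (hpos : ∀ A : H →L[ℂ] H, A.IsPositive → (ψ A).IsPositive)
    (hpure : ∀ x y : H,
      Tendsto (fun n : ℕ => (inner ℂ (((fun A => ψ A)^[n] (1 : H →L[ℂ] H)) x) y : ℂ))
        atTop (nhds 0))
    (W : H →L[ℂ] H) (hW : W = ψ W) : W = 0 := by
  have hfix : ∀ n : ℕ, (fun A => ψ A)^[n] W = W := by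
    intro n
    induction n with
    | zero => rfl
    | succ n ih => rw [Function.iterate_succ_apply, ← hW, ih]
  have key : ∀ x y : H, (inner ℂ (W x) y : ℂ) = 0 := by
    intro x y
    have h1 := tendsto_iter_inner ψ hpos hpure W x y
    have h2 : Tendsto (fun _ : ℕ => (inner ℂ (W x) y : ℂ)) atTop (nhds ((inner ℂ (W x) y : ℂ))) :=
      tendsto_const_nhds
    have h3 : Tendsto (fun _ : ℕ => (inner ℂ (W x) y : ℂ)) atTop (nhds 0) := by
      refine h1.congr fun n => ?_
      rw [hfix n]
    exact tendsto_nhds_unique h2 h3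
  ext x
  have := key x (W x)
  simpa [inner_self_eq_zero] using this

end Aux

/-- The defect map `Δ_φ = (id − φ₁) ∘ ⋯ ∘ (id − φ_k)`. -/
def defectMap {H : Type*} [NormedAddCommGroup H] [InnerProductSpace ℂ H] {k : ℕ}
    (φ : Fin k → ((H →L[ℂ] H) →ₗ[ℂ] (H →L[ℂ] H))) : (H →L[ℂ] H) → (H →L[ℂ] H) :=
  (List.finRange k).foldr (fun i f => (fun A => A - φ i A) ∘ f) id

/-- For commuting pure positive linear maps φ₁,…,φ_k on B(H), the defect map Δ_φ is injective
and every X is recovered by the iterated series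
X = Σ_{s_k} φ_k^{s_k}(⋯ Σ_{s₁} φ₁^{s₁}(Δ_φ(X)) ⋯), with WOT-convergent partial sums at each
stage: Y₀ = Δ_φ(X), Y_{j+1} = WOT-Σ_{s≥0} φ_{j+1}^{s}(Y_j), and Y_k = X. -/
theorem stmt9 {H : Type*} [NormedAddCommGroup H] [InnerProductSpace ℂ H] [CompleteSpace H]
    {k : ℕ} (φ : Fin k → ((H →L[ℂ] H) →ₗ[ℂ] (H →L[ℂ] H)))
    (hcomm : ∀ i j, (φ i).comp (φ j) = (φ j).comp (φ i))
    (hpos : ∀ i (A : H →L[ℂ] H), A.IsPositive → (φ i A).IsPositive)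
    (hpure : ∀ i (x y : H),
      Filter.Tendsto (fun n : ℕ => (inner ℂ (((fun A => φ i A)^[n] (1 : H →L[ℂ] H)) x) y : ℂ))
        Filter.atTop (nhds 0)) :
    Function.Injective (defectMap φ) ∧
      ∀ X : H →L[ℂ] H, ∃ Y : Fin (k + 1) → (H →L[ℂ] H),
        Y 0 = defectMap φ X ∧
        (∀ (j : Fin k) (x y : H),
          Filter.Tendsto
            (fun q : ℕ =>
              (inner ℂ ((∑ s ∈ Finset.range (q + 1),
                (fun A => φ j A)^[s] (Y j.castSucc)) x) y : ℂ))
            Filter.atTop (nhds (inner ℂ ((Y j.succ) x) y : ℂ))) ∧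
        Y (Fin.last k) = X := by
  classical
  set T : ℕ → (H →L[ℂ] H) → (H →L[ℂ] H) := fun j =>
    ((List.finRange k).drop j).foldr (fun i f => (fun A => A - φ i A) ∘ f) id with hT
  have hT0 : T 0 = defectMap φ := by
    simp [hT, defectMap]
  have hTk : ∀ A : H →L[ℂ] H, T k A = A := by
    intro A
    simp only [hT]
    rw [show List.drop k (List.finRange k) = [] by simp]
    rfl
  have hTstep : ∀ (j : ℕ) (hj : j < k) (A : H →L[ℂ] H),
      T j A = T (j + 1) A - φ ⟨j, hj⟩ (T (j + 1) A) := by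
    intro j hj A
    have hdrop : (List.finRange k).drop j = ⟨j, hj⟩ :: (List.finRange k).drop (j + 1) := by
      rw [List.drop_eq_getElem_cons (by simpa using hj)]
      simp [List.getElem_finRange]
    simp [hT, hdrop, Function.comp]
  have hTlin : ∀ (j : ℕ) (A B : H →L[ℂ] H), T j (A - B) = T j A - T j B := by
    have key : ∀ (l : List (Fin k)) (A B : H →L[ℂ] H),
        l.foldr (fun i f => (fun A => A - φ i A) ∘ f) id (A - B)
          = l.foldr (fun i f => (fun A => A - φ i A) ∘ f) id A
            - l.foldr (fun i f => (fun A => A - φ i A) ∘ f) id B := by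
      intro l
      induction l with
      | nil => intro A B; simp
      | cons i l ih =>
        intro A B
        simp only [List.foldr_cons, Function.comp_apply, ih A B, map_sub]
        abel
    intro j A B
    exact key _ A B
  constructor
  · intro X X' hXX'
    have hD : ∀ j : ℕ, j ≤ k → T j (X - X') = 0 := by
      intro j
      induction j with
      | zero =>
        intro _
        rw [hTlin 0 X X', hT0, hXX', sub_self]
      | succ j ih =>
        intro hj
        have hjk : j < k := hj
        have h0 := ih (le_of_lt hjk)
        rw [hTstep j hjk (X - X')] at h0
        have hfix : T (j + 1) (X - X') = φ ⟨j, hjk⟩ (T (j + 1) (X - X')) := by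
          exact sub_eq_zero.mp h0
        exact fixed_zero (φ ⟨j, hjk⟩) (hpos _) (hpure _) _ hfix
    have h1 := hD k le_rfl
    rw [hTk] at h1
    exact sub_eq_zero.mp h1
  · intro X
    refine ⟨fun j => T j.val X, ?_, ?_, ?_⟩
    · show T (0 : Fin (k+1)).val X = defectMap φ X
      rw [Fin.val_zero, hT0]
    · intro j x y
      have hjk : (j : ℕ) < k := j.isLt
      set W : H →L[ℂ] H := T ((j : ℕ) + 1) X with hW
      have hYc : T (j.castSucc : ℕ) X = W - φ j W := by
        rw [Fin.coe_castSucc, hTstep (j : ℕ) hjk X]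
      have hYs : T (j.succ : ℕ) X = W := by
        rw [Fin.val_succ]
      have hsum : ∀ q : ℕ, ∑ s ∈ Finset.range (q + 1),
          (fun A => φ j A)^[s] (W - φ j W) = W - (fun A => φ j A)^[q+1] W :=
        fun q => sum_iter (φ j) W (q + 1)
      have hz := tendsto_iter_inner (φ j) (hpos j) (hpure j) W x y
      have hz' : Filter.Tendsto (fun q : ℕ =>
          (inner ℂ (((fun A => φ j A)^[q+1] W) x) y : ℂ)) Filter.atTop (nhds 0) :=
        hz.comp (Filter.tendsto_add_atTop_nat 1)
      have hconst : Filter.Tendsto (fun _ : ℕ => (inner ℂ (W x) y : ℂ)) Filter.atTop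
          (nhds ((inner ℂ (W x) y : ℂ))) := tendsto_const_nhds
      have hfin := hconst.sub hz'
      rw [sub_zero] at hfin
      simp only [hYc, hYs]
      refine hfin.congr fun q => ?_
      rw [hsum q]
      simp [ContinuousLinearMap.sub_apply, inner_sub_left]
    · show T (Fin.last k : Fin (k+1)).val X = X
      rw [Fin.val_last, hTk]
end
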